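/- Let L, M, N be positive integers and let g_0, …, g_{L−1} ∈ ℓ²(ℤ²,ℍ). If the Gabor system G(g,L,M,N) is a Parseval frame for ℓ²(ℤ²,ℍ), then ∑_{l=0}^{L−1} ‖g_l‖² = N²/M². -/

import Mathlib

noncomputable section

open scoped Real

/-- The real quaternions. -/
abbrev ℍ : Type := Quaternion ℝ

/-- `e_i θ = cos θ + (sin θ) i`. -/
def eI (θ : ℝ) : ℍ := ⟨Real.cos θ, Real.sin θ, 0, 0⟩

/-- `e_j θ = cos θ + (sin θ) j`. -/
def eJ (θ : ℝ) : ℍ := ⟨Real.cos θ, 0, Real.sin θ, 0⟩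

/-- Quaternionic pairing `⟨f,g⟩ = ∑ conj (f k) * g k`. -/
def qpair (f g : ℤ × ℤ → ℍ) : ℍ := ∑' k : ℤ × ℤ, star (f k) * g k

/-- Membership in `ℓ²(ℤ², ℍ)`. -/
def MemL2 (f : ℤ × ℤ → ℍ) : Prop := Summable fun k : ℤ × ℤ => ‖f k‖ ^ 2

/-- `‖f‖² = ∑ |f k|²`. -/
def normSq2 (f : ℤ × ℤ → ℍ) : ℝ := ∑' k : ℤ × ℤ, ‖f k‖ ^ 2

/-- A window is real-valued if all its values lie in `ℝ ⊆ ℍ`. -/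
def IsRealValued (f : ℤ × ℤ → ℍ) : Prop := ∀ k : ℤ × ℤ, f k = ((f k).re : ℍ)

/-- The Gabor atom `E_{m/M} T_{nN} w`. -/
def gaborAtom (M N : ℕ) (w : ℤ × ℤ → ℍ) (m : ℕ × ℕ) (n : ℤ × ℤ) : ℤ × ℤ → ℍ :=
  fun k =>
    eI (2 * π * (m.1 : ℝ) * (k.1 : ℝ) / (M : ℝ)) *
      w (k.1 - n.1 * (N : ℤ), k.2 - n.2 * (N : ℤ)) *
      eJ (2 * π * (m.2 : ℝ) * (k.2 : ℝ) / (M : ℝ))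

/-- The index square `{0, …, M-1}²`. -/
abbrev msq (M : ℕ) : Finset (ℕ × ℕ) := Finset.range M ×ˢ Finset.range M

/-- `k ∈ {0, …, N-1}²` inside `ℤ²`. -/
def InNsq (N : ℕ) (k : ℤ × ℤ) : Prop :=
  0 ≤ k.1 ∧ k.1 < (N : ℤ) ∧ 0 ≤ k.2 ∧ k.2 < (N : ℤ)

/-- `∑_{l<L} ∑_{n∈ℤ²} ∑_{m∈{0,…,M-1}²} |⟨E_{m/M}T_{nN}g_l, h⟩|²`. -/
def frameSum (L M N : ℕ) (g : ℕ → ℤ × ℤ → ℍ) (h : ℤ × ℤ → ℍ) : ℝ :=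
  ∑ l ∈ Finset.range L, ∑' n : ℤ × ℤ, ∑ m ∈ msq M,
    ‖qpair (gaborAtom M N (g l) m n) h‖ ^ 2

/-- Bessel system with bound `B`. -/
def IsBessel (L M N : ℕ) (g : ℕ → ℤ × ℤ → ℍ) (B : ℝ) : Prop :=
  ∀ h : ℤ × ℤ → ℍ, MemL2 h → frameSum L M N g h ≤ B * normSq2 h

/-- Frame with bounds `A ≤ B`. -/
def IsFrame (L M N : ℕ) (g : ℕ → ℤ × ℤ → ℍ) (A B : ℝ) : Prop :=
  ∀ h : ℤ × ℤ → ℍ, MemL2 h →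
    A * normSq2 h ≤ frameSum L M N g h ∧ frameSum L M N g h ≤ B * normSq2 h

/-- Parseval frame. -/
def IsParseval (L M N : ℕ) (g : ℕ → ℤ × ℤ → ℍ) : Prop :=
  ∀ h : ℤ × ℤ → ℍ, MemL2 h → frameSum L M N g h = normSq2 h

/-- Orthonormal system. -/
def IsON (L M N : ℕ) (g : ℕ → ℤ × ℤ → ℍ) : Prop :=
  ∀ l l' : ℕ, l < L → l' < L → ∀ m ∈ msq M, ∀ m' ∈ msq M, ∀ n n' : ℤ × ℤ,
    qpair (gaborAtom M N (g l) m n) (gaborAtom M N (g l') m' n') =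
      if l = l' ∧ m = m' ∧ n = n' then 1 else 0

/-- `G(k,p) = ∑_{l<L} ∑_{n∈ℤ²} g_l(k-nN) g_l(k+pM-nN)`. -/
def gaborG (L M N : ℕ) (g : ℕ → ℤ × ℤ → ℍ) (k p : ℤ × ℤ) : ℍ :=
  ∑ l ∈ Finset.range L, ∑' n : ℤ × ℤ,
    g l (k.1 - n.1 * (N : ℤ), k.2 - n.2 * (N : ℤ)) *
      g l (k.1 + p.1 * (M : ℤ) - n.1 * (N : ℤ), k.2 + p.2 * (M : ℤ) - n.2 * (N : ℤ))

/-- Mixed version: `∑_{l<L} ∑_{n∈ℤ²} g_l(k-nN) h_l(k+pM-nN)`. -/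
def gaborGmix (L M N : ℕ) (g h : ℕ → ℤ × ℤ → ℍ) (k p : ℤ × ℤ) : ℍ :=
  ∑ l ∈ Finset.range L, ∑' n : ℤ × ℤ,
    g l (k.1 - n.1 * (N : ℤ), k.2 - n.2 * (N : ℤ)) *
      h l (k.1 + p.1 * (M : ℤ) - n.1 * (N : ℤ), k.2 + p.2 * (M : ℤ) - n.2 * (N : ℤ))

/-- `∑_{l<L} ∑_{n∈ℤ²} |g_l(k-nN)|²`. -/
def winSum (L N : ℕ) (g : ℕ → ℤ × ℤ → ℍ) (k : ℤ × ℤ) : ℝ :=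
  ∑ l ∈ Finset.range L, ∑' n : ℤ × ℤ,
    ‖g l (k.1 - n.1 * (N : ℤ), k.2 - n.2 * (N : ℤ))‖ ^ 2

/-- Support of diameter `< M` in every row and every column. -/
def DiamLt (M : ℕ) (f : ℤ × ℤ → ℍ) : Prop :=
  (∀ k₂ k₁ k₁' : ℤ, f (k₁, k₂) ≠ 0 → f (k₁', k₂) ≠ 0 → |k₁ - k₁'| < (M : ℤ)) ∧
  (∀ k₁ k₂ k₂' : ℤ, f (k₁, k₂) ≠ 0 → f (k₁, k₂') ≠ 0 → |k₂ - k₂'| < (M : ℤ))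

/-- `M`-periodicity. -/
def MPeriodic (M : ℕ) (f : ℤ × ℤ → ℍ) : Prop :=
  ∀ k : ℤ × ℤ, f (k.1 + (M : ℤ), k.2) = f k ∧ f (k.1, k.2 + (M : ℤ)) = f k

/-- Duality of two Gabor systems (on finitely supported sequences). -/
def AreDual (L M N : ℕ) (g h : ℕ → ℤ × ℤ → ℍ) : Prop :=
  ∀ f φ : ℤ × ℤ → ℍ, (Function.support f).Finite → (Function.support φ).Finite →
    (∑ l ∈ Finset.range L, ∑' n : ℤ × ℤ, ∑ m ∈ msq M,
      qpair f (gaborAtom M N (g l) m n) * qpair (gaborAtom M N (h l) m n) φ)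
      = qpair f φ

/-! ### Auxiliary material for the proof -/

lemma norm_eI (θ : ℝ) : ‖eI θ‖ = 1 := by
  have h : Quaternion.normSq (eI θ) = 1 := by
    rw [Quaternion.normSq_def']; simp [eI, Real.cos_sq_add_sin_sq]
  have h2 : ‖eI θ‖ * ‖eI θ‖ = 1 := by
    rw [← Quaternion.normSq_eq_norm_mul_self, h]
  nlinarith [norm_nonneg (eI θ)]

lemma norm_eJ (θ : ℝ) : ‖eJ θ‖ = 1 := by
  have h : Quaternion.normSq (eJ θ) = 1 := by
    rw [Quaternion.normSq_def']; simp [eJ, Real.cos_sq_add_sin_sq]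
  have h2 : ‖eJ θ‖ * ‖eJ θ‖ = 1 := by
    rw [← Quaternion.normSq_eq_norm_mul_self, h]
  nlinarith [norm_nonneg (eJ θ)]

/-- The delta sequence at `k₀`. -/
def delta (k₀ : ℤ × ℤ) : ℤ × ℤ → ℍ := fun k => if k = k₀ then 1 else 0

lemma memL2_delta (k₀ : ℤ × ℤ) : MemL2 (delta k₀) := by
  apply summable_of_ne_finset_zero (s := {k₀})
  intro k hk
  simp only [Finset.mem_singleton] at hk
  simp [delta, hk]

lemma normSq2_delta (k₀ : ℤ × ℤ) : normSq2 (delta k₀) = 1 := by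
  unfold normSq2
  rw [tsum_eq_single k₀ (by intro k hk; simp [delta, hk])]
  simp [delta]

lemma qpair_delta (f : ℤ × ℤ → ℍ) (k₀ : ℤ × ℤ) :
    qpair f (delta k₀) = star (f k₀) := by
  unfold qpair
  rw [tsum_eq_single k₀ (by intro k hk; simp [delta, hk])]
  simp [delta]

lemma norm_gaborAtom (M N : ℕ) (w : ℤ × ℤ → ℍ) (m : ℕ × ℕ) (n k : ℤ × ℤ) :
    ‖gaborAtom M N w m n k‖ = ‖w (k.1 - n.1 * (N : ℤ), k.2 - n.2 * (N : ℤ))‖ := by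
  simp [gaborAtom, norm_mul, norm_eI, norm_eJ]

lemma card_msq (M : ℕ) : (msq M).card = M * M := by
  simp [msq]

lemma frameSum_delta (L M N : ℕ) (g : ℕ → ℤ × ℤ → ℍ) (k₀ : ℤ × ℤ) :
    frameSum L M N g (delta k₀) = (M : ℝ) ^ 2 * winSum L N g k₀ := by
  unfold frameSum winSum
  rw [Finset.mul_sum]
  refine Finset.sum_congr rfl fun l _ => ?_
  rw [← tsum_mul_left]
  refine tsum_congr fun n => ?_
  have hm : ∀ m ∈ msq M,
      ‖qpair (gaborAtom M N (g l) m n) (delta k₀)‖ ^ 2 =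
        ‖g l (k₀.1 - n.1 * (N : ℤ), k₀.2 - n.2 * (N : ℤ))‖ ^ 2 := by
    intro m _
    rw [qpair_delta, norm_star, norm_gaborAtom]
  rw [Finset.sum_congr rfl hm, Finset.sum_const, card_msq, nsmul_eq_mul]
  push_cast
  ring

/-- The tiling equivalence `(Fin N × Fin N) × ℤ² ≃ ℤ²`, `((r₁,r₂),(n₁,n₂)) ↦ (r₁-n₁N, r₂-n₂N)`. -/
def eqN (N : ℕ) (hN : 0 < N) : (Fin N × Fin N) × (ℤ × ℤ) ≃ ℤ × ℤ where
  toFun x := ((x.1.1 : ℤ) - x.2.1 * (N : ℤ), (x.1.2 : ℤ) - x.2.2 * (N : ℤ))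
  invFun k :=
    ((⟨(k.1 % (N : ℤ)).toNat, by
        have h1 : 0 ≤ k.1 % (N : ℤ) := Int.emod_nonneg _ (by exact_mod_cast hN.ne')
        have h2 : k.1 % (N : ℤ) < (N : ℤ) := Int.emod_lt_of_pos _ (by exact_mod_cast hN)
        omega⟩,
      ⟨(k.2 % (N : ℤ)).toNat, by
        have h1 : 0 ≤ k.2 % (N : ℤ) := Int.emod_nonneg _ (by exact_mod_cast hN.ne')
        have h2 : k.2 % (N : ℤ) < (N : ℤ) := Int.emod_lt_of_pos _ (by exact_mod_cast hN)
        omega⟩),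
     ((k.1 % (N : ℤ) - k.1) / (N : ℤ), (k.2 % (N : ℤ) - k.2) / (N : ℤ)))
  left_inv := by
    rintro ⟨⟨r₁, r₂⟩, ⟨n₁, n₂⟩⟩
    have hN' : (N : ℤ) ≠ 0 := by exact_mod_cast hN.ne'
    have key : ∀ (r : Fin N) (n : ℤ),
        ((r : ℤ) - n * (N : ℤ)) % (N : ℤ) = (r : ℤ) := by
      intro r n
      have h1 : ((r : ℤ) - n * (N : ℤ)) % (N : ℤ) = (r : ℤ) % (N : ℤ) := by
        have := Int.add_mul_emod_self_right (a := (r : ℤ)) (b := -n) (c := (N : ℤ))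
        rw [← this]; ring_nf
      rw [h1, Int.emod_eq_of_lt (by positivity) (by exact_mod_cast r.2)]
    have key2 : ∀ (r : Fin N) (n : ℤ),
        ((((r : ℤ) - n * (N : ℤ)) % (N : ℤ)) - ((r : ℤ) - n * (N : ℤ))) / (N : ℤ) = n := by
      intro r n
      rw [key]
      have : (r : ℤ) - ((r : ℤ) - n * (N : ℤ)) = n * (N : ℤ) := by ring
      rw [this, Int.mul_ediv_cancel _ hN']
    simp only [Prod.mk.injEq]
    refine ⟨⟨?_, ?_⟩, key2 r₁ n₁, key2 r₂ n₂⟩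
    · ext; simp [key r₁ n₁]
    · ext; simp [key r₂ n₂]
  right_inv := by
    rintro ⟨k₁, k₂⟩
    have hN' : (N : ℤ) ≠ 0 := by exact_mod_cast hN.ne'
    have key : ∀ k : ℤ,
        ((k % (N : ℤ)).toNat : ℤ) - ((k % (N : ℤ) - k) / (N : ℤ)) * (N : ℤ) = k := by
      intro k
      have h1 : 0 ≤ k % (N : ℤ) := Int.emod_nonneg _ hN'
      rw [Int.toNat_of_nonneg h1]
      have h2 : k % (N : ℤ) - k = -((N : ℤ) * (k / (N : ℤ))) := by
        rw [Int.emod_def]; ring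
      rw [h2]
      have h3 : -((N : ℤ) * (k / (N : ℤ))) = (N : ℤ) * (-(k / (N : ℤ))) := by ring
      rw [h3, Int.mul_ediv_cancel_left _ hN']
      have := Int.emod_add_ediv_mul k (N : ℤ)
      linarith
    exact Prod.ext (key k₁) (key k₂)

set_option maxHeartbeats 1000000 in
lemma reindex (N : ℕ) (hN : 0 < N) (f : ℤ × ℤ → ℍ) (hf : MemL2 f) :
    normSq2 f = ∑ r : Fin N × Fin N, ∑' n : ℤ × ℤ,
      ‖f ((r.1 : ℤ) - n.1 * (N : ℤ), (r.2 : ℤ) - n.2 * (N : ℤ))‖ ^ 2 := by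
  unfold normSq2
  rw [← (eqN N hN).tsum_eq (fun k => ‖f k‖ ^ 2)]
  have hsum : Summable fun x : (Fin N × Fin N) × (ℤ × ℤ) => ‖f (eqN N hN x)‖ ^ 2 :=
    (Equiv.summable_iff (eqN N hN)).mpr hf
  rw [Summable.tsum_prod hsum, tsum_fintype]
  rfl

/-- for a Parseval quaternionic Gabor frame, `∑_l ‖g_l‖² = N²/M²`. -/
theorem stmt_2 (L M N : ℕ) (hL : 0 < L) (hM : 0 < M) (hN : 0 < N)
    (g : ℕ → ℤ × ℤ → ℍ) (hg : ∀ l < L, MemL2 (g l))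
    (hpar : IsParseval L M N g) :
    ∑ l ∈ Finset.range L, normSq2 (g l) = (N : ℝ) ^ 2 / (M : ℝ) ^ 2 := by
  classical
  have key : ∀ k₀ : ℤ × ℤ, winSum L N g k₀ = 1 / (M : ℝ) ^ 2 := by
    intro k₀
    have h := hpar (delta k₀) (memL2_delta k₀)
    rw [frameSum_delta, normSq2_delta] at h
    have hM' : ((M : ℝ) ^ 2) ≠ 0 := by positivity
    field_simp at h ⊢
    linarith
  have hre : ∀ l ∈ Finset.range L, normSq2 (g l) =
      ∑ r : Fin N × Fin N, ∑' n : ℤ × ℤ,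
        ‖g l ((r.1 : ℤ) - n.1 * (N : ℤ), (r.2 : ℤ) - n.2 * (N : ℤ))‖ ^ 2 := by
    intro l hl
    exact reindex N hN (g l) (hg l (Finset.mem_range.mp hl))
  rw [Finset.sum_congr rfl hre, Finset.sum_comm]
  have hw : ∀ r : Fin N × Fin N,
      (∑ l ∈ Finset.range L, ∑' n : ℤ × ℤ,
        ‖g l ((r.1 : ℤ) - n.1 * (N : ℤ), (r.2 : ℤ) - n.2 * (N : ℤ))‖ ^ 2)
        = 1 / (M : ℝ) ^ 2 := by
    intro r
    exact key ((r.1 : ℤ), (r.2 : ℤ))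
  rw [Finset.sum_congr rfl (fun r _ => hw r), Finset.sum_const]
  simp only [Finset.card_univ, Fintype.card_prod, Fintype.card_fin, nsmul_eq_mul]
  push_cast
  ring
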